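/- arXiv:math/0011229 — 4 statements merged into one kernel-verified Lean document; each statement's English description precedes it below -/
import Mathlib

section
/- Let T, S ∈ L(X, Y) and let U ⊆ ℂ be open and connected. Suppose there exist closed subspaces E ⊆ X and F ⊆ Y such that X = N(T - λS) ⊕ E and Y = R(T - λS) ⊕ F for all λ ∈ U (fixed complements). Then there exists a function G : U → L(Y, X) such that for all λ, μ ∈ U: (1) (T - λS) G(λ) (T - λS) = T - λS; (2) G(λ) (T - λS) G(λ) = G(λ); (3) G(λ) - G(μ) = (λ - μ) G(λ) S G(μ). -/
open ContinuousLinearMap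

private lemma gen_inv_aux
    {X Y : Type*} [NormedAddCommGroup X] [NormedSpace ℂ X] [CompleteSpace X]
    [NormedAddCommGroup Y] [NormedSpace ℂ Y] [CompleteSpace Y]
    (T S : X →L[ℂ] Y) (lam : ℂ)
    (E : Submodule ℂ X) (F : Submodule ℂ Y)
    (hE : IsClosed (E : Set X)) (hF : IsClosed (F : Set Y))
    (hXE : IsCompl (LinearMap.ker ((T - lam • S : X →L[ℂ] Y) : X →ₗ[ℂ] Y)) E)
    (hYF : IsCompl (LinearMap.range ((T - lam • S : X →L[ℂ] Y) : X →ₗ[ℂ] Y)) F) :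
    ∃ G : Y →L[ℂ] X,
      (∀ (e : E) (f : F), G ((T - lam • S) e + f) = e) ∧
      (∀ y : Y, ∃ (e : E) (f : F), (T - lam • S) e + f = y) := by
  haveI : CompleteSpace E := hE.completeSpace_coe
  haveI : CompleteSpace F := hF.completeSpace_coe
  set A : X →L[ℂ] Y := T - lam • S with hA
  set ψ : (E × F) →L[ℂ] Y := (A.comp E.subtypeL).coprod F.subtypeL with hψdef
  have hψ_apply : ∀ (e : E) (f : F), ψ (e, f) = A e + f := fun e f => rfl
  have hsurj : ∀ y : Y, ∃ (e : E) (f : F), A (e : X) + (f : Y) = y := by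
    intro y
    have hy : y ∈ LinearMap.range (A : X →ₗ[ℂ] Y) ⊔ F := by
      rw [codisjoint_iff.mp hYF.codisjoint]; trivial
    obtain ⟨r, hr, f, hf, hrf⟩ := Submodule.mem_sup.mp hy
    obtain ⟨x, hx⟩ := hr
    have hx2 : x ∈ LinearMap.ker (A : X →ₗ[ℂ] Y) ⊔ E := by
      rw [codisjoint_iff.mp hXE.codisjoint]; trivial
    obtain ⟨k, hk, e, he, hke⟩ := Submodule.mem_sup.mp hx2
    refine ⟨⟨e, he⟩, ⟨f, hf⟩, ?_⟩
    have hAk : A k = 0 := hk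
    have hAe : A e = r := by rw [← hx, ← hke, map_add, ContinuousLinearMap.coe_coe, hAk, zero_add]
    rw [hAe, hrf]
  have hinj0 : ∀ p : E × F, ψ p = 0 → p = 0 := by
    rintro ⟨e, f⟩ h0
    have h0' : A (e : X) + (f : Y) = 0 := h0
    have hAe : A (e : X) ∈ LinearMap.range (A : X →ₗ[ℂ] Y) ⊓ F := by
      refine ⟨⟨(e : X), rfl⟩, ?_⟩
      have : A (e : X) = -(f : Y) := eq_neg_of_add_eq_zero_left h0'
      rw [this]; exact F.neg_mem f.2
    rw [disjoint_iff.mp hYF.disjoint] at hAe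
    have hAe0 : A (e : X) = 0 := by simpa using hAe
    have heK : (e : X) ∈ LinearMap.ker (A : X →ₗ[ℂ] Y) ⊓ E := ⟨hAe0, e.2⟩
    rw [disjoint_iff.mp hXE.disjoint] at heK
    have he0 : (e : X) = 0 := by simpa using heK
    have hf0 : (f : Y) = 0 := by rw [hAe0, zero_add] at h0'; exact h0'
    exact Prod.ext (Subtype.ext he0) (Subtype.ext hf0)
  have hinj : Function.Injective ψ := by
    intro p q hpq
    have : ψ (p - q) = 0 := by rw [map_sub, hpq, sub_self]
    have := hinj0 _ this
    exact sub_eq_zero.mp this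
  have hsurjψ : Function.Surjective ψ := by
    intro y
    obtain ⟨e, f, hef⟩ := hsurj y
    exact ⟨(e, f), hef⟩
  set Φ : (E × F) ≃L[ℂ] Y :=
    ContinuousLinearEquiv.ofBijective ψ (LinearMap.ker_eq_bot.mpr hinj)
      (LinearMap.range_eq_top.mpr hsurjψ) with hΦdef
  have hΦ_apply : ∀ p : E × F, Φ p = ψ p := fun p => rfl
  refine ⟨E.subtypeL.comp ((ContinuousLinearMap.fst ℂ E F).comp
      (Φ.symm : Y →L[ℂ] E × F)), ?_, hsurj⟩
  intro e f
  have h1 : Φ (e, f) = A (e : X) + (f : Y) := hΦ_apply (e, f)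
  have h2 : Φ.symm (A (e : X) + (f : Y)) = (e, f) := by
    rw [← h1, Φ.symm_apply_apply]
  simp only [ContinuousLinearMap.coe_comp', Function.comp_apply,
    ContinuousLinearEquiv.coe_coe, h2]
  rfl

/-- If the pencil `λ ↦ T - λS` has fixed complements on an open connected
set `U`, then it admits a generalized resolvent on `U`. -/
theorem fixed_complements_implies_generalized_resolvent
    {X Y : Type*} [NormedAddCommGroup X] [NormedSpace ℂ X] [CompleteSpace X]
    [NormedAddCommGroup Y] [NormedSpace ℂ Y] [CompleteSpace Y]
    (T S : X →L[ℂ] Y) (U : Set ℂ) (hU : IsOpen U) (hUconn : IsConnected U)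
    (E : Submodule ℂ X) (F : Submodule ℂ Y)
    (hE : IsClosed (E : Set X)) (hF : IsClosed (F : Set Y))
    (hXE : ∀ lam ∈ U, IsCompl (LinearMap.ker ((T - lam • S : X →L[ℂ] Y) : X →ₗ[ℂ] Y)) E)
    (hYF : ∀ lam ∈ U, IsCompl (LinearMap.range ((T - lam • S : X →L[ℂ] Y) : X →ₗ[ℂ] Y)) F) :
    ∃ G : ℂ → (Y →L[ℂ] X),
      (∀ lam ∈ U, (T - lam • S).comp ((G lam).comp (T - lam • S)) = T - lam • S) ∧
      (∀ lam ∈ U, (G lam).comp ((T - lam • S).comp (G lam)) = G lam) ∧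
      (∀ lam ∈ U, ∀ mu ∈ U,
        G lam - G mu = (lam - mu) • ((G lam).comp (S.comp (G mu)))) := by
  classical
  set G : ℂ → (Y →L[ℂ] X) := fun lam =>
    if h : lam ∈ U then
      (gen_inv_aux T S lam E F hE hF (hXE lam h) (hYF lam h)).choose
    else 0 with hGdef
  have hkey : ∀ lam (h : lam ∈ U), ∀ (e : E) (f : F),
      G lam ((T - lam • S) (e : X) + (f : Y)) = e := by
    intro lam h
    simp only [hGdef, dif_pos h]
    exact (gen_inv_aux T S lam E F hE hF (hXE lam h) (hYF lam h)).choose_spec.1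
  have hdecY : ∀ lam (h : lam ∈ U), ∀ y : Y, ∃ (e : E) (f : F),
      (T - lam • S) (e : X) + (f : Y) = y := by
    intro lam h
    exact (gen_inv_aux T S lam E F hE hF (hXE lam h) (hYF lam h)).choose_spec.2
  -- G kills F
  have hGF : ∀ lam (h : lam ∈ U), ∀ f : F, G lam (f : Y) = 0 := by
    intro lam h f
    have := hkey lam h 0 f
    simpa using this
  -- G (A e) = e for e ∈ E
  have hGAe : ∀ lam (h : lam ∈ U), ∀ e : E, G lam ((T - lam • S) (e : X)) = e := by
    intro lam h e
    have := hkey lam h e 0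
    simpa using this
  refine ⟨G, ?_, ?_, ?_⟩
  · -- A G A = A
    intro lam h
    ext x
    have hx : x ∈ LinearMap.ker ((T - lam • S : X →L[ℂ] Y) : X →ₗ[ℂ] Y) ⊔ E := by
      rw [codisjoint_iff.mp (hXE lam h).codisjoint]; trivial
    obtain ⟨k, hk, e, he, hke⟩ := Submodule.mem_sup.mp hx
    have hAk : (T - lam • S) k = 0 := hk
    have hAx : (T - lam • S) x = (T - lam • S) e := by
      rw [← hke, map_add, hAk, zero_add]
    simp only [ContinuousLinearMap.coe_comp', Function.comp_apply]
    rw [hAx, hGAe lam h ⟨e, he⟩]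
  · -- G A G = G
    intro lam h
    ext y
    obtain ⟨e, f, hef⟩ := hdecY lam h y
    simp only [ContinuousLinearMap.coe_comp', Function.comp_apply]
    have hGy : G lam y = e := by rw [← hef, hkey lam h e f]
    rw [hGy, hGAe lam h e]
  · -- resolvent identity
    intro lam hl mu hm
    ext y
    obtain ⟨e, f, hef⟩ := hdecY mu hm y
    have hGmy : G mu y = e := by rw [← hef, hkey mu hm e f]
    have hstep : (lam - mu) • (S (e : X)) =
        (T - mu • S) (e : X) - (T - lam • S) (e : X) := by
      simp only [ContinuousLinearMap.sub_apply, ContinuousLinearMap.smul_apply]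
      rw [sub_smul]
      abel
    have hGlf : G lam (f : Y) = 0 := hGF lam hl f
    have hAmu : (T - mu • S) (e : X) = y - (f : Y) := by
      rw [← hef]; abel
    simp only [ContinuousLinearMap.sub_apply, ContinuousLinearMap.smul_apply,
      ContinuousLinearMap.coe_comp', Function.comp_apply]
    rw [hGmy, ← map_smul, hstep, map_sub, hAmu, map_sub, hGlf,
      hGAe lam hl e]
    abel
end

section
/- Let T, S ∈ L(X, Y), U ⊆ ℂ open and connected, and suppose G : U → L(Y, X) is a generalized resolvent of the pencil λ ↦ T - λS on U, i.e., (T - λS)G(λ)(T - λS) = T - λS, G(λ)(T - λS)G(λ) = G(λ), and G(λ) - G(μ) = (λ - μ)G(λ)SG(μ) for all λ, μ ∈ U. Then the range R(G(λ)) is the same subspace for all λ ∈ U. -/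
/-- The range of a generalized resolvent of the pencil `λ ↦ T - λS`
on an open connected set `U` is the same subspace for all `λ ∈ U`. -/
theorem generalized_resolvent_constant_range
    {X Y : Type*} [NormedAddCommGroup X] [NormedSpace ℂ X] [CompleteSpace X]
    [NormedAddCommGroup Y] [NormedSpace ℂ Y] [CompleteSpace Y]
    (T S : X →L[ℂ] Y) (U : Set ℂ) (hU : IsOpen U) (hUconn : IsConnected U)
    (G : ℂ → (Y →L[ℂ] X))
    (h1 : ∀ lam ∈ U, (T - lam • S).comp ((G lam).comp (T - lam • S)) = T - lam • S)
    (h2 : ∀ lam ∈ U, (G lam).comp ((T - lam • S).comp (G lam)) = G lam)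
    (h3 : ∀ lam ∈ U, ∀ mu ∈ U,
      G lam - G mu = (lam - mu) • ((G lam).comp (S.comp (G mu)))) :
    ∀ lam ∈ U, ∀ mu ∈ U, LinearMap.range (G lam : Y →ₗ[ℂ] X) = LinearMap.range (G mu : Y →ₗ[ℂ] X) := by
  have key : ∀ lam ∈ U, ∀ mu ∈ U,
      LinearMap.range (G mu : Y →ₗ[ℂ] X) ≤ LinearMap.range (G lam : Y →ₗ[ℂ] X) := by
    intro lam hlam mu hmu y hy
    obtain ⟨x, rfl⟩ := hy
    refine ⟨x - (lam - mu) • S (G mu x), ?_⟩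
    have h := congrArg (fun f : Y →L[ℂ] X => f x) (h3 lam hlam mu hmu)
    simp only [ContinuousLinearMap.sub_apply, ContinuousLinearMap.smul_apply,
      ContinuousLinearMap.comp_apply] at h
    have : G lam x - (lam - mu) • G lam (S (G mu x)) = G mu x := by
      rw [← h, sub_sub_cancel]
    simpa [map_sub, map_smul] using this
  intro lam hlam mu hmu
  exact le_antisymm (key mu hmu lam hlam) (key lam hlam mu hmu)
end

section
/- Let T, S ∈ L(X, Y), U ⊆ ℂ open and connected, and G a generalized resolvent of the pencil λ ↦ T - λS on U. Then the kernel N(G(λ)) is the same closed subspace of Y for all λ ∈ U. -/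
/-- The kernel of a generalized resolvent of the pencil `λ ↦ T - λS`
on an open connected set `U` is the same closed subspace of `Y` for all `λ ∈ U`. -/
theorem generalized_resolvent_constant_kernel
    {X Y : Type*} [NormedAddCommGroup X] [NormedSpace ℂ X] [CompleteSpace X]
    [NormedAddCommGroup Y] [NormedSpace ℂ Y] [CompleteSpace Y]
    (T S : X →L[ℂ] Y) (U : Set ℂ) (hU : IsOpen U) (hUconn : IsConnected U)
    (G : ℂ → (Y →L[ℂ] X))
    (h1 : ∀ lam ∈ U, (T - lam • S).comp ((G lam).comp (T - lam • S)) = T - lam • S)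
    (h2 : ∀ lam ∈ U, (G lam).comp ((T - lam • S).comp (G lam)) = G lam)
    (h3 : ∀ lam ∈ U, ∀ mu ∈ U,
      G lam - G mu = (lam - mu) • ((G lam).comp (S.comp (G mu)))) :
    (∀ lam ∈ U, ∀ mu ∈ U, LinearMap.ker (G lam : Y →ₗ[ℂ] X) = LinearMap.ker (G mu : Y →ₗ[ℂ] X)) ∧
    (∀ lam ∈ U, IsClosed ((LinearMap.ker (G lam : Y →ₗ[ℂ] X) : Submodule ℂ Y) : Set Y)) := by
  have key : ∀ lam ∈ U, ∀ mu ∈ U, LinearMap.ker (G mu : Y →ₗ[ℂ] X) ≤ LinearMap.ker (G lam : Y →ₗ[ℂ] X) := by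
    intro lam hlam mu hmu y hy
    have hy' : G mu y = 0 := hy
    have := congrArg (fun (A : Y →L[ℂ] X) => A y) (h3 lam hlam mu hmu)
    simp only [ContinuousLinearMap.sub_apply, ContinuousLinearMap.smul_apply,
      ContinuousLinearMap.comp_apply, hy', map_zero, smul_zero] at this
    simpa using this
  refine ⟨fun lam hlam mu hmu => le_antisymm (key mu hmu lam hlam) (key lam hlam mu hmu),
    fun lam _ => ?_⟩
  exact ContinuousLinearMap.isClosed_ker (G lam)
end

section
/- Let T, S ∈ L(X, Y) with A(λ) := T - λS. Suppose G(λ), G(μ) are generalized inverses of A(λ), A(μ) respectively whose kernels both equal a fixed subspace F and whose ranges both equal a fixed subspace E, where X = N(A(λ)) ⊕ E = N(A(μ)) ⊕ E and Y = R(A(λ)) ⊕ F = R(A(μ)) ⊕ F. Then G(λ) - G(μ) = (λ - μ) G(λ) S G(μ). -/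
/-- If `G(λ)` and `G(μ)` are generalized inverses of `T - λS` and `T - μS`
with the same kernel `F` and the same range `E` (which are fixed complements of the
corresponding kernels and ranges), then the resolvent identity
`G(λ) - G(μ) = (λ - μ) G(λ) S G(μ)` holds. -/
theorem resolvent_identity_of_fixed_complements
    {X Y : Type*} [NormedAddCommGroup X] [NormedSpace ℂ X] [CompleteSpace X]
    [NormedAddCommGroup Y] [NormedSpace ℂ Y] [CompleteSpace Y]
    (T S : X →L[ℂ] Y) (lam mu : ℂ) (Gl Gm : Y →L[ℂ] X)
    (E : Submodule ℂ X) (F : Submodule ℂ Y)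
    (hEl : IsCompl (LinearMap.ker ((T - lam • S : X →L[ℂ] Y) : X →ₗ[ℂ] Y)) E)
    (hEm : IsCompl (LinearMap.ker ((T - mu • S : X →L[ℂ] Y) : X →ₗ[ℂ] Y)) E)
    (hFl : IsCompl (LinearMap.range ((T - lam • S : X →L[ℂ] Y) : X →ₗ[ℂ] Y)) F)
    (hFm : IsCompl (LinearMap.range ((T - mu • S : X →L[ℂ] Y) : X →ₗ[ℂ] Y)) F)
    (hl1 : (T - lam • S).comp (Gl.comp (T - lam • S)) = T - lam • S)
    (hl2 : Gl.comp ((T - lam • S).comp Gl) = Gl)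
    (hm1 : (T - mu • S).comp (Gm.comp (T - mu • S)) = T - mu • S)
    (hm2 : Gm.comp ((T - mu • S).comp Gm) = Gm)
    (hkerl : LinearMap.ker (Gl : Y →ₗ[ℂ] X) = F) (hkerm : LinearMap.ker (Gm : Y →ₗ[ℂ] X) = F)
    (hranl : LinearMap.range (Gl : Y →ₗ[ℂ] X) = E) (hranm : LinearMap.range (Gm : Y →ₗ[ℂ] X) = E) :
    Gl - Gm = (lam - mu) • (Gl.comp (S.comp Gm)) := by
  set Al := T - lam • S with hAl
  set Am := T - mu • S with hAm
  ext y
  -- Lemma 1 : Gl (Al (Gm y)) = Gm y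
  have h1 : Gl (Al (Gm y)) = Gm y := by
    have : Gm y ∈ LinearMap.range (Gl : Y →ₗ[ℂ] X) := by rw [hranl, ← hranm]; exact ⟨y, rfl⟩
    obtain ⟨z, hz⟩ := this
    rw [← hz]
    exact congrFun (congrArg DFunLike.coe hl2) z
  -- Lemma 2 : Gl (Am (Gm y)) = Gl y
  have h2 : Gl (Am (Gm y)) = Gl y := by
    set w := y - Am (Gm y) with hw
    have hGmw : Gm w = 0 := by
      have hmem : Gm w ∈ LinearMap.ker (Am : X →ₗ[ℂ] Y) ⊓ E := by
        constructor
        · have : Am (Gm w) = 0 := by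
            have hrw : Gm (Am (Gm y)) = Gm y :=
              congrFun (congrArg DFunLike.coe hm2) y
            simp [hw, map_sub, hrw]
          simpa [LinearMap.mem_ker] using this
        · rw [← hranm]; exact ⟨w, rfl⟩
      rw [hEm.inf_eq_bot] at hmem
      simpa using hmem
    have hwF : w ∈ F := by rw [← hkerm]; exact hGmw
    have : Gl w = 0 := by exact (show w ∈ LinearMap.ker (Gl : Y →ₗ[ℂ] X) by rw [hkerl]; exact hwF)
    have := this
    simp only [hw, map_sub, sub_eq_zero] at this
    exact this.symm
  -- combine
  have key : Gl y - Gm y = Gl (Am (Gm y)) - Gl (Al (Gm y)) := by rw [h1, h2]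
  have hdiff : Am (Gm y) - Al (Gm y) = (lam - mu) • S (Gm y) := by
    simp only [hAl, hAm, ContinuousLinearMap.sub_apply, ContinuousLinearMap.smul_apply]
    ring_nf
    module
  calc (Gl - Gm) y = Gl y - Gm y := rfl
    _ = Gl (Am (Gm y) - Al (Gm y)) := by rw [map_sub]; exact key
    _ = Gl ((lam - mu) • S (Gm y)) := by rw [hdiff]
    _ = ((lam - mu) • (Gl.comp (S.comp Gm))) y := by simp
end
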